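/- Suppose v ∈ E⁰ and R is a congruence on G(E) such that (v, μ) ∈ R for some μ ≠ v but (v, 0) ∉ R. Then the set S = {μ ∈ G(E) | (v, μ) ∈ R} is an inverse subsemigroup of G(E), and every element of S has the form xpx⁻¹ or xp⁻¹x⁻¹ for paths x, p with s(x) = v and r(x) = s(p) = r(p). -/

import Mathlib

universe u

/-- A directed graph: vertices, edges, source and range maps. -/
structure DGraph : Type (u + 1) where
  V : Type u
  Ed : Type u
  src : Ed → V
  rng : Ed → V

/-- The end vertex of a list of edges started at `v` (ignoring composability). -/
def DGraph.ranAux (G : DGraph) : G.V → List G.Ed → G.V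
  | v, [] => v
  | _, e :: es => DGraph.ranAux G (G.rng e) es

/-- The edges `l` form a composable path starting at `v`. -/
def DGraph.Chain (G : DGraph) : G.V → List G.Ed → Prop
  | _, [] => True
  | v, e :: es => G.src e = v ∧ DGraph.Chain G (G.rng e) es

theorem DGraph.ranAux_append (G : DGraph) (v : G.V) (l1 l2 : List G.Ed) :
    G.ranAux v (l1 ++ l2) = G.ranAux (G.ranAux v l1) l2 := by
  induction l1 generalizing v with
  | nil => rfl
  | cons e es ih => exact ih (G.rng e)

theorem DGraph.chain_append (G : DGraph) {v : G.V} {l1 l2 : List G.Ed}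
    (h1 : G.Chain v l1) (h2 : G.Chain (G.ranAux v l1) l2) : G.Chain v (l1 ++ l2) := by
  induction l1 generalizing v with
  | nil => exact h2
  | cons e es ih => exact ⟨h1.1, ih h1.2 h2⟩

theorem DGraph.chain_append_right (G : DGraph) {v : G.V} {l1 l2 : List G.Ed}
    (h : G.Chain v (l1 ++ l2)) : G.Chain (G.ranAux v l1) l2 := by
  induction l1 generalizing v with
  | nil => exact h
  | cons e es ih => exact ih h.2

/-- A (finite, directed) path in the graph `G`: a start vertex together
with a composable list of edges. Vertices are the paths of length `0`. -/
structure GPath (G : DGraph.{u}) : Type u where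
  start : G.V
  edges : List G.Ed
  chain : G.Chain start edges

namespace GPath

variable {G : DGraph}

/-- The range (end vertex) of a path. -/
def ran (p : GPath G) : G.V := G.ranAux p.start p.edges

/-- The path of length zero at a vertex. -/
def ofVertex (G : DGraph) (v : G.V) : GPath G := ⟨v, [], trivial⟩

/-- The path of length one given by an edge. -/
def ofEdge (G : DGraph) (e : G.Ed) : GPath G := ⟨G.src e, [e], ⟨rfl, trivial⟩⟩

@[simp] theorem ofVertex_ran (G : DGraph) (v : G.V) : (ofVertex G v).ran = v := rfl

@[simp] theorem ofEdge_ran (G : DGraph) (e : G.Ed) : (ofEdge G e).ran = G.rng e := rfl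

/-- Concatenation of composable paths. -/
def append (p q : GPath G) (h : p.ran = q.start) : GPath G :=
  ⟨p.start, p.edges ++ q.edges,
    G.chain_append p.chain (by
      show G.Chain (G.ranAux p.start p.edges) q.edges
      have : G.ranAux p.start p.edges = q.start := h
      rw [this]; exact q.chain)⟩

@[simp] theorem append_ran (p q : GPath G) (h : p.ran = q.start) :
    (p.append q h).ran = q.ran := by
  show G.ranAux p.start (p.edges ++ q.edges) = q.ran
  rw [G.ranAux_append]
  have : G.ranAux p.start p.edges = q.start := h
  rw [this]; rfl

/-- `y` is an initial segment of the path `p`. -/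
def IsPrefixOf (y p : GPath G) : Prop := y.start = p.start ∧ y.edges <+: p.edges

/-- The remainder `t` of `p` after its initial segment `y`, so that `p = y ++ t`. -/
def remainder (y p : GPath G) (h : y.IsPrefixOf p) : GPath G :=
  ⟨y.ran, p.edges.drop y.edges.length, by
    obtain ⟨l2, hl⟩ := h.2
    rw [← hl, List.drop_left]
    show G.Chain (G.ranAux y.start y.edges) l2
    rw [h.1]
    exact G.chain_append_right (v := p.start) (l1 := y.edges) (l2 := l2)
      (by rw [hl]; exact p.chain)⟩

@[simp] theorem remainder_ran (y p : GPath G) (h : y.IsPrefixOf p) :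
    (y.remainder p h).ran = p.ran := by
  obtain ⟨l2, hl⟩ := h.2
  show G.ranAux y.ran (p.edges.drop y.edges.length) = p.ran
  rw [← hl, List.drop_left]
  show G.ranAux (G.ranAux y.start y.edges) l2 = p.ran
  rw [h.1, ← G.ranAux_append, hl]
  rfl

end GPath

/-- The graph inverse semigroup of `G` (in normal form): its elements are zero together
with the elements `x * y⁻¹` for paths `x`, `y` with the same range. -/
inductive GIS (G : DGraph.{u}) : Type u where
  | zero : GIS G
  | mk (x y : GPath G) (h : x.ran = y.ran) : GIS G

instance (G : DGraph) : Zero (GIS G) := ⟨GIS.zero⟩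

open scoped Classical in
/-- Multiplication in the graph inverse semigroup. -/
noncomputable def GIS.gmul {G : DGraph} : GIS G → GIS G → GIS G
  | GIS.zero, _ => GIS.zero
  | GIS.mk _ _ _, GIS.zero => GIS.zero
  | GIS.mk x y hxy, GIS.mk p q hpq =>
    if h1 : y.IsPrefixOf p then
      GIS.mk (x.append (y.remainder p h1) hxy) q
        (by exact (GPath.append_ran _ _ _).trans ((GPath.remainder_ran _ _ _).trans hpq))
    else if h2 : p.IsPrefixOf y then
      GIS.mk x (q.append (p.remainder y h2) hpq.symm)
        (by exact ((GPath.append_ran _ _ _).trans ((GPath.remainder_ran _ _ _).trans hxy.symm)).symm)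
    else GIS.zero

noncomputable instance (G : DGraph) : Mul (GIS G) := ⟨GIS.gmul⟩

/-- The element of `GIS G` corresponding to a vertex `v` (i.e. `v = v * v⁻¹`). -/
def vertexEl (G : DGraph) (v : G.V) : GIS G :=
  GIS.mk (GPath.ofVertex G v) (GPath.ofVertex G v) rfl

/-- The element of `GIS G` corresponding to an edge `e` (i.e. `e = e * r(e)⁻¹`). -/
def edgeEl (G : DGraph) (e : G.Ed) : GIS G :=
  GIS.mk (GPath.ofEdge G e) (GPath.ofVertex G (G.rng e)) rfl

/-- The inverse operation on `GIS G`: `(x y⁻¹)⁻¹ = y x⁻¹`. -/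
def GIS.inv {G : DGraph} : GIS G → GIS G
  | GIS.zero => GIS.zero
  | GIS.mk x y h => GIS.mk y x h.symm

/-- `a` lies in the principal left ideal generated by `b` (`S¹a ⊆ S¹b`). -/
def GreenLeL {G : DGraph} (a b : GIS G) : Prop := a = b ∨ ∃ c, a = c * b

/-- `a` lies in the principal right ideal generated by `b` (`aS¹ ⊆ bS¹`). -/
def GreenLeR {G : DGraph} (a b : GIS G) : Prop := a = b ∨ ∃ c, a = b * c

/-- `a` lies in the principal two-sided ideal generated by `b` (`S¹aS¹ ⊆ S¹bS¹`). -/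
def GreenLeJ {G : DGraph} (a b : GIS G) : Prop :=
  a = b ∨ (∃ c, a = c * b) ∨ (∃ c, a = b * c) ∨ (∃ c d, a = c * b * d)

/-- Green's `L`-relation. -/
def GreenEqL {G : DGraph} (a b : GIS G) : Prop := GreenLeL a b ∧ GreenLeL b a

/-- Green's `R`-relation. -/
def GreenEqR {G : DGraph} (a b : GIS G) : Prop := GreenLeR a b ∧ GreenLeR b a

/-- Green's `J`-relation. -/
def GreenEqJ {G : DGraph} (a b : GIS G) : Prop := GreenLeJ a b ∧ GreenLeJ b a

/-- There is a (possibly trivial) directed path from `v` to `w` in `G`. -/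
def GConnected (G : DGraph) (v w : G.V) : Prop := ∃ t : GPath G, t.start = v ∧ t.ran = w

/-- `I` is a (two-sided) ideal of `GIS G`. -/
def GISIdeal {G : DGraph} (I : Set (GIS G)) : Prop :=
  ∀ a ∈ I, ∀ c : GIS G, a * c ∈ I ∧ c * a ∈ I

/-- `R` is the Rees congruence of some ideal `I`, i.e. `R = (I × I) ∪ Δ`. -/
def IsReesCon {G : DGraph} (R : Con (GIS G)) : Prop :=
  ∃ I : Set (GIS G), GISIdeal I ∧ ∀ a b : GIS G, R a b ↔ (a ∈ I ∧ b ∈ I) ∨ a = b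

/-- The only congruences on `GIS G` are the universal one and the diagonal. -/
def CongFree (G : DGraph) : Prop :=
  ∀ R : Con (GIS G), (∀ a b : GIS G, R a b) ∨ (∀ a b : GIS G, R a b ↔ a = b)

/-- The natural partial order on the inverse semigroup `GIS G`:
`a ≤ b` iff `a = ε * b` for some idempotent `ε`. -/
def natLe {G : DGraph} (a b : GIS G) : Prop := ∃ ε : GIS G, ε * ε = ε ∧ a = ε * b

/-- The graph obtained from `G` by deleting the vertices in `S` and all
edges incident to them. -/
def DGraph.delete (G : DGraph) (S : Set G.V) : DGraph where
  V := {v : G.V // v ∉ S}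
  Ed := {e : G.Ed // G.src e ∉ S ∧ G.rng e ∉ S}
  src e := ⟨G.src e.1, e.2.1⟩
  rng e := ⟨G.rng e.1, e.2.2⟩

/-- The graph with a single vertex and `n` loops; its graph inverse semigroup
is the polycyclic monoid `Pₙ`. -/
def polyGraph (n : ℕ) : DGraph :=
  ⟨PUnit, Fin n, fun _ => PUnit.unit, fun _ => PUnit.unit⟩

section Stmt12Aux

variable {G : DGraph}

theorem GPath.ext' {p q : GPath G} (hs : p.start = q.start) (he : p.edges = q.edges) :
    p = q := by
  obtain ⟨ps, pe, pc⟩ := p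
  obtain ⟨qs, qe, qc⟩ := q
  dsimp at hs he
  subst hs; subst he; rfl

theorem GIS.mk_eq {x y x' y' : GPath G} (hx : x = x') (hy : y = y')
    (h : x.ran = y.ran) (h' : x'.ran = y'.ran) : GIS.mk x y h = GIS.mk x' y' h' := by
  subst hx; subst hy; rfl

theorem selfPrefix (p : GPath G) : p.IsPrefixOf p := ⟨rfl, List.prefix_rfl⟩

theorem gmul_pos1 (x y p q : GPath G) (hxy : x.ran = y.ran) (hpq : p.ran = q.ran)
    (hpre : y.IsPrefixOf p) :
    GIS.mk x y hxy * GIS.mk p q hpq =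
      GIS.mk (x.append (y.remainder p hpre) hxy) q
        (by exact (GPath.append_ran _ _ _).trans ((GPath.remainder_ran _ _ _).trans hpq)) := by
  show GIS.gmul _ _ = _
  exact dif_pos hpre

theorem gmul_pos2 (x y p q : GPath G) (hxy : x.ran = y.ran) (hpq : p.ran = q.ran)
    (hpre1 : ¬ y.IsPrefixOf p) (hpre2 : p.IsPrefixOf y) :
    GIS.mk x y hxy * GIS.mk p q hpq =
      GIS.mk x (q.append (p.remainder y hpre2) hpq.symm)
        (by exact ((GPath.append_ran _ _ _).trans ((GPath.remainder_ran _ _ _).trans hxy.symm)).symm) := by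
  show GIS.gmul _ _ = _
  exact (dif_neg hpre1).trans (dif_pos hpre2)

theorem gmul_zero (x y p q : GPath G) (hxy : x.ran = y.ran) (hpq : p.ran = q.ran)
    (hpre1 : ¬ y.IsPrefixOf p) (hpre2 : ¬ p.IsPrefixOf y) :
    GIS.mk x y hxy * GIS.mk p q hpq = 0 := by
  show GIS.gmul _ _ = _
  exact (dif_neg hpre1).trans (dif_neg hpre2)

theorem vmul_left {v : G.V} (p q : GPath G) (hpq : p.ran = q.ran) (hp : p.start = v) :
    vertexEl G v * GIS.mk p q hpq = GIS.mk p q hpq := by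
  have hpre : (GPath.ofVertex G v).IsPrefixOf p := ⟨hp.symm, List.nil_prefix⟩
  rw [show vertexEl G v = GIS.mk (GPath.ofVertex G v) (GPath.ofVertex G v) rfl from rfl,
      gmul_pos1 _ _ _ _ _ _ hpre]
  refine GIS.mk_eq ?_ rfl _ _
  exact GPath.ext' hp.symm rfl

theorem vmul_right {v : G.V} (p q : GPath G) (hpq : p.ran = q.ran) (hq : q.start = v) :
    GIS.mk p q hpq * vertexEl G v = GIS.mk p q hpq := by
  rw [show vertexEl G v = GIS.mk (GPath.ofVertex G v) (GPath.ofVertex G v) rfl from rfl]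
  by_cases he : q.edges = []
  · have hpre : q.IsPrefixOf (GPath.ofVertex G v) :=
      ⟨hq, by rw [he]; exact List.nil_prefix⟩
    rw [gmul_pos1 _ _ _ _ _ _ hpre]
    refine GIS.mk_eq ?_ ?_ _ _
    · refine GPath.ext' rfl ?_
      show p.edges ++ List.drop q.edges.length [] = p.edges
      simp
    · exact (GPath.ext' hq he).symm
  · have hpre1 : ¬ q.IsPrefixOf (GPath.ofVertex G v) := fun h => he (List.prefix_nil.mp h.2)
    have hpre2 : (GPath.ofVertex G v).IsPrefixOf q := ⟨hq.symm, List.nil_prefix⟩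
    rw [gmul_pos2 _ _ _ _ _ _ hpre1 hpre2]
    refine GIS.mk_eq rfl ?_ _ _
    exact GPath.ext' hq.symm rfl

end Stmt12Aux

/-- If `v ∈ E⁰` and `R` is a congruence on `G(E)` with `(v, μ) ∈ R` for
some `μ ≠ v` but `(v, 0) ∉ R`, then `S = {μ | (v, μ) ∈ R}` is an inverse subsemigroup of
`G(E)`, and every element of `S` has the form `x p x⁻¹` or `x p⁻¹ x⁻¹` for paths `x, p`
with `s(x) = v` and `r(x) = s(p) = r(p)`. -/
theorem stmt12 (G : DGraph) (R : Con (GIS G)) (v : G.V)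
    (h1 : ∃ mu : GIS G, mu ≠ vertexEl G v ∧ R (vertexEl G v) mu)
    (h2 : ¬ R (vertexEl G v) 0) :
    (∀ mu nu : GIS G, R (vertexEl G v) mu → R (vertexEl G v) nu →
      R (vertexEl G v) (mu * nu)) ∧
    (∀ mu : GIS G, R (vertexEl G v) mu → R (vertexEl G v) mu.inv) ∧
    (∀ mu : GIS G, R (vertexEl G v) mu →
      ∃ (x p : GPath G) (hx : x.start = v) (hp : x.ran = p.start) (hpr : p.ran = x.ran)
        (hm : (x.append p hp).ran = x.ran),
        mu = GIS.mk (x.append p hp) x hm ∨ mu = GIS.mk x (x.append p hp) hm.symm) := by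
  clear h1
  have hvv : vertexEl G v * vertexEl G v = vertexEl G v :=
    vmul_left (GPath.ofVertex G v) (GPath.ofVertex G v) rfl rfl
  have key : ∀ (p q : GPath G) (hpq : p.ran = q.ran),
      R (vertexEl G v) (GIS.mk p q hpq) → p.start = v ∧ q.start = v := by
    intro p q hpq hR
    constructor
    · by_contra hne
      have hpre1 : ¬ (GPath.ofVertex G v).IsPrefixOf p := fun h => hne h.1.symm
      have hpre2 : ¬ p.IsPrefixOf (GPath.ofVertex G v) := fun h => hne h.1
      have h0 : vertexEl G v * GIS.mk p q hpq = 0 :=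
        gmul_zero _ _ _ _ rfl hpq hpre1 hpre2
      have := R.mul (R.refl (vertexEl G v)) hR
      rw [hvv, h0] at this
      exact h2 this
    · by_contra hne
      have hpre1 : ¬ q.IsPrefixOf (GPath.ofVertex G v) := fun h => hne h.1
      have hpre2 : ¬ (GPath.ofVertex G v).IsPrefixOf q := fun h => hne h.1.symm
      have h0 : GIS.mk p q hpq * vertexEl G v = 0 :=
        gmul_zero _ _ _ _ hpq rfl hpre1 hpre2
      have := R.mul hR (R.refl (vertexEl G v))
      rw [hvv, h0] at this
      exact h2 this
  refine ⟨?_, ?_, ?_⟩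
  · intro mu nu ha hb
    have := R.mul ha hb
    rwa [hvv] at this
  · intro mu hR
    cases mu with
    | zero => exact absurd hR h2
    | mk p q hpq =>
      obtain ⟨hp, hq⟩ := key p q hpq hR
      have e1 : vertexEl G v * GIS.mk q p hpq.symm = GIS.mk q p hpq.symm :=
        vmul_left _ _ _ hq
      have e2 : GIS.mk p q hpq * GIS.mk q p hpq.symm = GIS.mk p p rfl := by
        rw [gmul_pos1 p q q p hpq hpq.symm (selfPrefix q)]
        refine GIS.mk_eq ?_ rfl _ _
        refine GPath.ext' rfl ?_
        show p.edges ++ q.edges.drop q.edges.length = p.edges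
        rw [List.drop_length, List.append_nil]
      have s1 : R (GIS.mk q p hpq.symm) (GIS.mk p p rfl) := by
        have := R.mul hR (R.refl (GIS.mk q p hpq.symm))
        rwa [e1, e2] at this
      have e3 : GIS.mk p p rfl * vertexEl G v = GIS.mk p p rfl :=
        vmul_right _ _ _ hp
      have e4 : GIS.mk p p rfl * GIS.mk p q hpq = GIS.mk p q hpq := by
        rw [gmul_pos1 p p p q rfl hpq (selfPrefix p)]
        refine GIS.mk_eq ?_ rfl _ _
        refine GPath.ext' rfl ?_
        show p.edges ++ p.edges.drop p.edges.length = p.edges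
        rw [List.drop_length, List.append_nil]
      have s2 : R (GIS.mk p p rfl) (GIS.mk p q hpq) := by
        have := R.mul (R.refl (GIS.mk p p rfl)) hR
        rwa [e3, e4] at this
      show R (vertexEl G v) (GIS.mk q p hpq.symm)
      exact R.trans hR (R.trans (R.symm s2) (R.symm s1))
  · intro mu hR
    cases mu with
    | zero => exact absurd hR h2
    | mk p q hpq =>
      obtain ⟨hp, hq⟩ := key p q hpq hR
      have hmm : R (vertexEl G v) (GIS.mk p q hpq * GIS.mk p q hpq) := by
        have := R.mul hR hR
        rwa [hvv] at this
      have hpre : q.IsPrefixOf p ∨ p.IsPrefixOf q := by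
        by_contra hc
        push_neg at hc
        rw [gmul_zero _ _ _ _ hpq hpq hc.1 hc.2] at hmm
        exact h2 hmm
      cases hpre with
      | inl hyp =>
        have hpr : (q.remainder p hyp).ran = q.ran := by
          rw [GPath.remainder_ran]; exact hpq
        have hm : (q.append (q.remainder p hyp) rfl).ran = q.ran := by
          exact (GPath.append_ran _ _ _).trans hpr
        have heq : p = q.append (q.remainder p hyp) rfl := by
          refine GPath.ext' hyp.1.symm ?_
          obtain ⟨t, ht⟩ := hyp.2
          show p.edges = q.edges ++ p.edges.drop q.edges.length
          rw [← ht, List.drop_left]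
        exact ⟨q, q.remainder p hyp, hq, rfl, hpr, hm,
          Or.inl (GIS.mk_eq heq rfl _ _)⟩
      | inr hyp =>
        have hpr : (p.remainder q hyp).ran = p.ran := by
          rw [GPath.remainder_ran]; exact hpq.symm
        have hm : (p.append (p.remainder q hyp) rfl).ran = p.ran := by
          exact (GPath.append_ran _ _ _).trans hpr
        have heq : q = p.append (p.remainder q hyp) rfl := by
          refine GPath.ext' hyp.1.symm ?_
          obtain ⟨t, ht⟩ := hyp.2
          show q.edges = p.edges ++ q.edges.drop p.edges.length
          rw [← ht, List.drop_left]
        exact ⟨p, p.remainder q hyp, hp, rfl, hpr, hm,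
          Or.inr (GIS.mk_eq rfl heq _ _)⟩
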